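/- (Split Short Five Lemma for stably strong points.) Let (X,P_X), (B,P_B), (X',P_{X'}), (B',P_{B'}) be preordered groups, φ an action of B on X and φ' an action of B' on X' by group automorphisms, each admitting compatible cones, and equip X ⋊_φ B and X' ⋊_{φ'} B' with their minimal compatible cones P and P' (the smallest conjugation-closed submonoids containing P_X × P_B and P_{X'} × P_{B'}, respectively). Suppose a : X → X', b : X ⋊_φ B → X' ⋊_{φ'} B', c : B → B' are monotone group homomorphisms (a(P_X) ⊆ P_{X'}, b(P) ⊆ P', c(P_B) ⊆ P_{B'}) such that b(x,0) = (a(x),0) for all x ∈ X, π₂'∘b = c∘π₂, and b(0,β) = (0,c(β)) for all β ∈ B. If a and c are isomorphisms of preordered groups (group isomorphisms with a(P_X) = P_{X'} and c(P_B) = P_{B'}), then b is an isomorphism of preordered groups (a group isomorphism with b(P) = P'). -/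

import Mathlib

namespace PreordGrp

/-- A positive cone on an additive group: a submonoid closed under conjugation.
It induces the preorder `x ≤ y ↔ -x + y ∈ P`. -/
def IsCone {G : Type*} [AddGroup G] (P : Set G) : Prop :=
  (0 : G) ∈ P ∧ (∀ x ∈ P, ∀ y ∈ P, x + y ∈ P) ∧ ∀ x ∈ P, ∀ a : G, a + x - a ∈ P

/-- `x ≤ y` in the preorder induced by the cone `P`. -/
def coneLe {G : Type*} [AddGroup G] (P : Set G) (x y : G) : Prop := -x + y ∈ P

/-- `x ~ y` : both `x ≤ y` and `y ≤ x` in the preorder induced by `P`. -/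
def coneSim {G : Type*} [AddGroup G] (P : Set G) (x y : G) : Prop :=
  coneLe P x y ∧ coneLe P y x

section SDP

variable {X B : Type*} [AddGroup X] [AddGroup B]

/-- An action of `B` on `X` by group automorphisms:
`φ 0 = id` and `φ (b + b') = φ b ∘ φ b'`. -/
def IsAction (φ : B → X ≃+ X) : Prop :=
  (∀ x : X, φ 0 x = x) ∧ ∀ b b' : B, ∀ x : X, φ (b + b') x = φ b (φ b' x)

/-- Addition in the semidirect product `X ⋊_φ B`:
`(x, b) + (x', b') = (x + φ b x', b + b')`. -/
def sAdd (φ : B → X ≃+ X) (p q : X × B) : X × B := (p.1 + φ p.2 q.1, p.2 + q.2)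

/-- Negation in the semidirect product `X ⋊_φ B`. -/
def sNeg (φ : B → X ≃+ X) (p : X × B) : X × B := (-(φ (-p.2) p.1), -p.2)

/-- A positive cone on `X ⋊_φ B`: contains `0`, closed under addition and
under conjugation `p ↦ g + p - g`. -/
def IsSCone (φ : B → X ≃+ X) (P : Set (X × B)) : Prop :=
  ((0, 0) : X × B) ∈ P ∧ (∀ p ∈ P, ∀ q ∈ P, sAdd φ p q ∈ P) ∧
    ∀ p ∈ P, ∀ g : X × B, sAdd φ (sAdd φ g p) (sNeg φ g) ∈ P

/-- A compatible positive cone `P` on `X ⋊_φ B`: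
(a) `(x, b) ∈ P → b ∈ PB`, (b) `(x, 0) ∈ P ↔ x ∈ PX`, (c) `b ∈ PB → (0, b) ∈ P`. -/
def IsCompatible (φ : B → X ≃+ X) (PX : Set X) (PB : Set B) (P : Set (X × B)) : Prop :=
  IsSCone φ P ∧ (∀ x b, (x, b) ∈ P → b ∈ PB) ∧
    (∀ x : X, (x, (0 : B)) ∈ P ↔ x ∈ PX) ∧ ∀ b ∈ PB, ((0 : X), b) ∈ P

/-- The lexicographic cone: `(x, b)` with `b > 0`, or `b ~ 0` and `x ∈ PX`. -/
def lexCone (PX : Set X) (PB : Set B) : Set (X × B) :=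
  {p | (p.2 ∈ PB ∧ -p.2 ∉ PB) ∨ (p.2 ∈ PB ∧ -p.2 ∈ PB ∧ p.1 ∈ PX)}

/-- The smallest positive cone (conjugation-closed submonoid) of `X ⋊_φ B`
containing the product cone `PX ×ˢ PB`. -/
def genCone (φ : B → X ≃+ X) (PX : Set X) (PB : Set B) : Set (X × B) :=
  ⋂₀ {Q : Set (X × B) | IsSCone φ Q ∧ PX ×ˢ PB ⊆ Q}

end SDP


theorem genCone_isSCone {X B : Type*} [AddGroup X] [AddGroup B]
    (φ : B → X ≃+ X) (PX : Set X) (PB : Set B) :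
    IsSCone φ (genCone φ PX PB) := by
  refine ⟨?_, ?_, ?_⟩
  · intro Q hQ; exact hQ.1.1
  · intro p hp q hq Q hQ
    exact hQ.1.2.1 p (hp Q hQ) q (hq Q hQ)
  · intro p hp g Q hQ
    exact hQ.1.2.2 p (hp Q hQ) g

theorem prod_subset_genCone {X B : Type*} [AddGroup X] [AddGroup B]
    (φ : B → X ≃+ X) (PX : Set X) (PB : Set B) :
    PX ×ˢ PB ⊆ genCone φ PX PB := by
  intro p hp Q hQ
  exact hQ.2 hp

/-- Split Short Five Lemma for stably strong points: given two
split extensions equipped with their minimal compatible cones and a morphism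
`(a, bm, c)` between them with `a` and `c` isomorphisms of preordered groups,
the middle map `bm` is an isomorphism of preordered groups. -/
theorem stmt13 {X B X' B' : Type*}
    [AddGroup X] [AddGroup B] [AddGroup X'] [AddGroup B']
    (PX : Set X) (PB : Set B) (PX' : Set X') (PB' : Set B')
    (hPX : IsCone PX) (hPB : IsCone PB) (hPX' : IsCone PX') (hPB' : IsCone PB')
    (φ : B → X ≃+ X) (φ' : B' → X' ≃+ X') (hφ : IsAction φ) (hφ' : IsAction φ')
    (hex : ∃ P : Set (X × B), IsCompatible φ PX PB P)
    (hex' : ∃ P' : Set (X' × B'), IsCompatible φ' PX' PB' P')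
    (P : Set (X × B)) (hP : P = genCone φ PX PB)
    (P' : Set (X' × B')) (hP' : P' = genCone φ' PX' PB')
    (a : X → X') (haadd : ∀ x y : X, a (x + y) = a x + a y)
    (hamono : ∀ x ∈ PX, a x ∈ PX')
    (bm : X × B → X' × B')
    (hbadd : ∀ p q : X × B, bm (sAdd φ p q) = sAdd φ' (bm p) (bm q))
    (hbmono : ∀ p ∈ P, bm p ∈ P')
    (c : B → B') (hcadd : ∀ x y : B, c (x + y) = c x + c y)
    (hcmono : ∀ b ∈ PB, c b ∈ PB')
    (hbk : ∀ x : X, bm (x, 0) = (a x, 0))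
    (hbp : ∀ p : X × B, (bm p).2 = c p.2)
    (hbs : ∀ β : B, bm ((0 : X), β) = ((0 : X'), c β))
    (haiso : Function.Bijective a) (haim : a '' PX = PX')
    (hciso : Function.Bijective c) (hcim : c '' PB = PB') :
    Function.Bijective bm ∧ bm '' P = P' := by
  subst hP hP'
  -- basic additive facts
  have a0 : a 0 = 0 := by
    have h := haadd 0 0; rw [add_zero] at h; exact (right_eq_add.mp h)
  have c0 : c 0 = 0 := by
    have h := hcadd 0 0; rw [add_zero] at h; exact (right_eq_add.mp h)
  have aneg : ∀ x : X, a (-x) = -(a x) := by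
    intro x
    have h := haadd (-x) x
    rw [neg_add_cancel, a0] at h
    exact eq_neg_of_add_eq_zero_left h.symm
  have cneg : ∀ b : B, c (-b) = -(c b) := by
    intro b
    have h := hcadd (-b) b
    rw [neg_add_cancel, c0] at h
    exact eq_neg_of_add_eq_zero_left h.symm
  have bm_eq : ∀ (x : X) (β : B), bm (x, β) = (a x, c β) := by
    intro x β
    have h1 : sAdd φ (x, 0) ((0 : X), β) = (x, β) := by
      simp [sAdd]
    have h := hbadd (x, 0) (0, β)
    rw [h1, hbk, hbs] at h
    rw [h]; simp [sAdd]
  have acomp : ∀ (β : B) (x : X), a (φ β x) = φ' (c β) (a x) := by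
    intro β x
    have h1 : sAdd φ ((0 : X), β) (x, 0) = (φ β x, β) := by simp [sAdd]
    have h := hbadd (0, β) (x, 0)
    rw [h1, hbs, hbk, bm_eq] at h
    have h2 : (a (φ β x), c β) = (φ' (c β) (a x), c β) := by
      rw [h]; simp [sAdd]
    exact (Prod.mk.injEq _ _ _ _).mp h2 |>.1
  have bneg : ∀ p : X × B, bm (sNeg φ p) = sNeg φ' (bm p) := by
    rintro ⟨x, β⟩
    have h1 : sNeg φ (x, β) = (-(φ (-β) x), -β) := rfl
    rw [h1, bm_eq, bm_eq, aneg, cneg, acomp, cneg]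
    rfl
  -- bijectivity
  have hbij : Function.Bijective bm := by
    constructor
    · rintro ⟨x, β⟩ ⟨y, γ⟩ h
      rw [bm_eq, bm_eq] at h
      obtain ⟨h1, h2⟩ := Prod.mk.injEq .. |>.mp h
      exact Prod.ext (haiso.1 h1) (hciso.1 h2)
    · rintro ⟨x', β'⟩
      obtain ⟨x, rfl⟩ := haiso.2 x'
      obtain ⟨β, rfl⟩ := hciso.2 β'
      exact ⟨(x, β), bm_eq x β⟩
  refine ⟨hbij, Set.Subset.antisymm ?_ ?_⟩
  · rintro _ ⟨p, hp, rfl⟩; exact hbmono p hp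
  · -- show the image of P is an SCone containing the product cone
    have hQcone : IsSCone φ' (bm '' genCone φ PX PB) := by
      have hS := genCone_isSCone φ PX PB
      refine ⟨?_, ?_, ?_⟩
      · refine ⟨(0, 0), hS.1, ?_⟩
        rw [bm_eq, a0, c0]
      · rintro _ ⟨p, hp, rfl⟩ _ ⟨q, hq, rfl⟩
        exact ⟨sAdd φ p q, hS.2.1 p hp q hq, hbadd p q⟩
      · rintro _ ⟨p, hp, rfl⟩ g'
        obtain ⟨g, rfl⟩ := hbij.2 g'
        refine ⟨sAdd φ (sAdd φ g p) (sNeg φ g), hS.2.2 p hp g, ?_⟩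
        rw [hbadd, hbadd, bneg]
    have hQsub : PX' ×ˢ PB' ⊆ bm '' genCone φ PX PB := by
      rintro ⟨x', β'⟩ ⟨hx', hβ'⟩
      rw [← haim] at hx'
      rw [← hcim] at hβ'
      obtain ⟨x, hx, rfl⟩ := hx'
      obtain ⟨β, hβ, rfl⟩ := hβ'
      exact ⟨(x, β), prod_subset_genCone φ PX PB ⟨hx, hβ⟩, bm_eq x β⟩
    exact Set.sInter_subset_of_mem ⟨hQcone, hQsub⟩


end PreordGrp
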